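/- Let d ≥ 2 and let θ₀ = {x ∈ F_{3^{2d}} : x^{3^d+1} = 1}, viewed as a set of points of PG(2d−1,3) via the cyclic model (x and y represent the same point iff x/y ∈ F_3\{0}). Then θ₀ is a set of (3^d+1)/2 points of PG(2d−1,3) no four of which are coplanar. -/

import Mathlib

section helpers
variable {F : Type*} [Field F]

lemma lem2 (h3 : (3:F) = 0) (x y t : F)
    (hx : x ≠ 0) (hy : y ≠ 0) (ht : t ≠ 0)
    (e1 : x + y = t) (e2 : x⁻¹ + y⁻¹ = t⁻¹) : x = y := by
  have key : t * x + t * y = x * y := by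
    field_simp at e2
    linear_combination e2
  have hsq : (x - y)^2 = 0 := by
    linear_combination (x + y) * e1 + key - x*y*h3
  exact sub_eq_zero.mp (pow_eq_zero_iff (n := 2) (by norm_num) |>.mp hsq)

lemma lem3 (x y z t : F)
    (hx : x ≠ 0) (hy : y ≠ 0) (hz : z ≠ 0) (ht : t ≠ 0)
    (e1 : x + y + z = t) (e2 : x⁻¹ + y⁻¹ + z⁻¹ = t⁻¹) : t = x ∨ t = y ∨ t = z := by
  have key : t * (x*y + y*z + z*x) = x * y * z := by
    field_simp at e2
    linear_combination e2
  have hprod : (t - x) * ((t - y) * (t - z)) = 0 := by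
    linear_combination (-t^2) * e1 + key
  rcases mul_eq_zero.mp hprod with h | h
  · exact Or.inl (sub_eq_zero.mp h)
  · rcases mul_eq_zero.mp h with h' | h'
    · exact Or.inr (Or.inl (sub_eq_zero.mp h'))
    · exact Or.inr (Or.inr (sub_eq_zero.mp h'))

lemma two_gen (h3 : (3:F) = 0) (b c y z t : F)
    (hb : b = 0 ∨ b = 1 ∨ b = -1) (hc : c = 0 ∨ c = 1 ∨ c = -1)
    (hy : y ≠ 0) (hz : z ≠ 0) (ht : t ≠ 0)
    (e1 : b*y + c*z = t) (e2 : b*y⁻¹ + c*z⁻¹ = t⁻¹) :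
    y^2 = z^2 ∨ y^2 = t^2 ∨ z^2 = t^2 := by
  have hny : (-y) ≠ 0 := neg_ne_zero.mpr hy
  have hnz : (-z) ≠ 0 := neg_ne_zero.mpr hz
  rcases hb with rfl | rfl | rfl <;> rcases hc with rfl | rfl | rfl
  · exact absurd (by linear_combination -e1) ht
  · exact Or.inr (Or.inr (by rw [show z = t by linear_combination e1]))
  · have h : (-z) = t := by linear_combination e1
    exact Or.inr (Or.inr (by rw [← h]; ring))
  · exact Or.inr (Or.inl (by rw [show y = t by linear_combination e1]))
  · have h := lem2 h3 y z t hy hz ht (by linear_combination e1) (by linear_combination e2)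
    exact Or.inl (by rw [h])
  · have h := lem2 h3 y (-z) t hy hnz ht (by linear_combination e1)
      (by rw [inv_neg]; linear_combination e2)
    exact Or.inl (by rw [h]; ring)
  · have h : (-y) = t := by linear_combination e1
    exact Or.inr (Or.inl (by rw [← h]; ring))
  · have h := lem2 h3 (-y) z t hny hz ht (by linear_combination e1)
      (by rw [inv_neg]; linear_combination e2)
    exact Or.inl (by rw [← h]; ring)
  · have h := lem2 h3 (-y) (-z) t hny hnz ht (by linear_combination e1)
      (by rw [inv_neg, inv_neg]; linear_combination e2)
    exact Or.inl (by rw [neg_inj.mp h])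

lemma master (h3 : (3:F) = 0) (a b c x y z t : F)
    (ha : a = 0 ∨ a = 1 ∨ a = -1) (hb : b = 0 ∨ b = 1 ∨ b = -1)
    (hc : c = 0 ∨ c = 1 ∨ c = -1)
    (hx : x ≠ 0) (hy : y ≠ 0) (hz : z ≠ 0) (ht : t ≠ 0)
    (e1 : a*x + b*y + c*z = t) (e2 : a*x⁻¹ + b*y⁻¹ + c*z⁻¹ = t⁻¹) :
    x^2 = y^2 ∨ x^2 = z^2 ∨ x^2 = t^2 ∨ y^2 = z^2 ∨ y^2 = t^2 ∨ z^2 = t^2 := by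
  have hnx : (-x) ≠ 0 := neg_ne_zero.mpr hx
  have hny : (-y) ≠ 0 := neg_ne_zero.mpr hy
  have hnz : (-z) ≠ 0 := neg_ne_zero.mpr hz
  rcases ha with rfl | ha'
  · rcases two_gen h3 b c y z t hb hc hy hz ht (by linear_combination e1)
      (by linear_combination e2) with h | h | h
    · exact Or.inr (Or.inr (Or.inr (Or.inl h)))
    · exact Or.inr (Or.inr (Or.inr (Or.inr (Or.inl h))))
    · exact Or.inr (Or.inr (Or.inr (Or.inr (Or.inr h))))
  rcases hb with rfl | hb'
  · rcases two_gen h3 a c x z t (Or.inr ha') hc hx hz ht (by linear_combination e1)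
      (by linear_combination e2) with h | h | h
    · exact Or.inr (Or.inl h)
    · exact Or.inr (Or.inr (Or.inl h))
    · exact Or.inr (Or.inr (Or.inr (Or.inr (Or.inr h))))
  rcases hc with rfl | hc'
  · rcases two_gen h3 a b x y t (Or.inr ha') (Or.inr hb') hx hy ht (by linear_combination e1)
      (by linear_combination e2) with h | h | h
    · exact Or.inl h
    · exact Or.inr (Or.inr (Or.inl h))
    · exact Or.inr (Or.inr (Or.inr (Or.inr (Or.inl h))))
  -- all of a, b, c are ±1
  have sq : ∀ u v : F, (v = u ∨ v = -u) → u^2 = v^2 := by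
    rintro u v (rfl | rfl) <;> ring
  have fin : ∀ x' y' z' : F, x' ≠ 0 → y' ≠ 0 → z' ≠ 0 →
      (x' = x ∨ x' = -x) → (y' = y ∨ y' = -y) → (z' = z ∨ z' = -z) →
      x' + y' + z' = t → x'⁻¹ + y'⁻¹ + z'⁻¹ = t⁻¹ →
      x^2 = y^2 ∨ x^2 = z^2 ∨ x^2 = t^2 ∨ y^2 = z^2 ∨ y^2 = t^2 ∨ z^2 = t^2 := by
    intro x' y' z' hx' hy' hz' hxx hyy hzz f1 f2
    rcases lem3 x' y' z' t hx' hy' hz' ht f1 f2 with h | h | h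
    · refine Or.inr (Or.inr (Or.inl ?_))
      rcases hxx with h' | h' <;> (rw [h'] at h; rw [h]; try ring)
    · refine Or.inr (Or.inr (Or.inr (Or.inr (Or.inl ?_))))
      rcases hyy with h' | h' <;> (rw [h'] at h; rw [h]; try ring)
    · refine Or.inr (Or.inr (Or.inr (Or.inr (Or.inr ?_))))
      rcases hzz with h' | h' <;> (rw [h'] at h; rw [h]; try ring)
  rcases ha' with rfl | rfl <;> rcases hb' with rfl | rfl <;> rcases hc' with rfl | rfl
  · exact fin x y z hx hy hz (Or.inl rfl) (Or.inl rfl) (Or.inl rfl)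
      (by linear_combination e1) (by linear_combination e2)
  · exact fin x y (-z) hx hy hnz (Or.inl rfl) (Or.inl rfl) (Or.inr rfl)
      (by linear_combination e1) (by rw [inv_neg]; linear_combination e2)
  · exact fin x (-y) z hx hny hz (Or.inl rfl) (Or.inr rfl) (Or.inl rfl)
      (by linear_combination e1) (by rw [inv_neg]; linear_combination e2)
  · exact fin x (-y) (-z) hx hny hnz (Or.inl rfl) (Or.inr rfl) (Or.inr rfl)
      (by linear_combination e1) (by rw [inv_neg, inv_neg]; linear_combination e2)
  · exact fin (-x) y z hnx hy hz (Or.inr rfl) (Or.inl rfl) (Or.inl rfl)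
      (by linear_combination e1) (by rw [inv_neg]; linear_combination e2)
  · exact fin (-x) y (-z) hnx hy hnz (Or.inr rfl) (Or.inl rfl) (Or.inr rfl)
      (by linear_combination e1) (by rw [inv_neg, inv_neg]; linear_combination e2)
  · exact fin (-x) (-y) z hnx hny hz (Or.inr rfl) (Or.inr rfl) (Or.inl rfl)
      (by linear_combination e1) (by rw [inv_neg, inv_neg]; linear_combination e2)
  · exact fin (-x) (-y) (-z) hnx hny hnz (Or.inr rfl) (Or.inr rfl) (Or.inr rfl)
      (by linear_combination e1) (by rw [inv_neg, inv_neg, inv_neg]; linear_combination e2)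

end helpers

/-- θ₀ = {x : x^{3^d+1} = 1} gives (3^d+1)/2 points of PG(2d−1,3) in the
cyclic model (x ~ y iff x² = y²), no four of which are coplanar
(coplanarity of ⟨x⟩,⟨y⟩,⟨z⟩,⟨t⟩ means ax + by + cz = t for some a,b,c ∈ F_3). -/
theorem stmt7 (d : ℕ) (hd : 2 ≤ d) (F : Type) [Field F] [Fintype F] [DecidableEq F]
    (hcard : Fintype.card F = 3 ^ (2 * d)) :
    (Finset.univ.filter (fun u : F => ∃ x : F, x ^ (3 ^ d + 1) = 1 ∧ u = x ^ 2)).card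
        = (3 ^ d + 1) / 2 ∧
    ∀ x y z t : F, x ^ (3 ^ d + 1) = 1 → y ^ (3 ^ d + 1) = 1 →
      z ^ (3 ^ d + 1) = 1 → t ^ (3 ^ d + 1) = 1 →
      x ^ 2 ≠ y ^ 2 → x ^ 2 ≠ z ^ 2 → x ^ 2 ≠ t ^ 2 →
      y ^ 2 ≠ z ^ 2 → y ^ 2 ≠ t ^ 2 → z ^ 2 ≠ t ^ 2 →
      ¬ ∃ a b c : F, (a = 0 ∨ a = 1 ∨ a = -1) ∧ (b = 0 ∨ b = 1 ∨ b = -1) ∧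
        (c = 0 ∨ c = 1 ∨ c = -1) ∧ a * x + b * y + c * z = t := by
  haveI hp3 : Fact (Nat.Prime 3) := ⟨by norm_num⟩
  -- characteristic 3
  have hr : ringChar F = 3 := by
    have hd3 : (3 : ℕ) ∣ Fintype.card F := by
      rw [hcard]; exact dvd_pow_self 3 (by omega)
    have h1 : (3 : ℕ) ∣ ringChar F := (prime_dvd_char_iff_dvd_card 3).mpr hd3
    haveI := ringChar.charP F
    have hprime : (ringChar F).Prime := CharP.char_is_prime F (ringChar F)
    exact ((Nat.prime_dvd_prime_iff_eq (by norm_num) hprime).mp h1).symm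
  haveI : CharP F 3 := hr ▸ ringChar.charP F
  have h3 : (3 : F) = 0 := CharP.cast_eq_zero F 3
  have h2ne : (2 : F) ≠ 0 := fun h => one_ne_zero (α := F) (by linear_combination h3 - h)
  set n : ℕ := 3 ^ d + 1 with hn
  have hn0 : 0 < n := by positivity
  have hodd : Odd (3 ^ d) := Odd.pow ⟨1, by norm_num⟩
  have hneven : Even n := hodd.add_one
  have hne0 : ∀ u : F, u ^ n = 1 → u ≠ 0 := by
    intro u hu h0
    rw [h0, zero_pow hn0.ne'] at hu
    exact zero_ne_one hu
  constructor
  · -- counting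
    have hdvd : n ∣ Fintype.card Fˣ := by
      rw [Fintype.card_units, hcard]
      refine ⟨3 ^ d - 1, ?_⟩
      obtain ⟨m, hm⟩ : ∃ m, 3 ^ d = m + 1 :=
        ⟨3 ^ d - 1, by have := Nat.one_le_pow d 3 (by norm_num); omega⟩
      have h2d : (3 : ℕ) ^ (2 * d) = 3 ^ d * 3 ^ d := by rw [two_mul, pow_add]
      rw [h2d, hn, hm]
      simp only [Nat.add_sub_cancel]
      exact Nat.sub_eq_of_eq_add (by ring)
    have hcardU : Fintype.card Fˣ ≠ 0 := Fintype.card_ne_zero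
    obtain ⟨g, hg⟩ := IsCyclic.exists_ofOrder_eq_natCard (α := Fˣ)
    rw [Nat.card_eq_fintype_card] at hg
    set ζ : Fˣ := g ^ (Fintype.card Fˣ / n) with hζ
    have hordζ : orderOf ζ = n := by
      rw [hζ, orderOf_pow, hg, Nat.gcd_eq_right (Nat.div_dvd_of_dvd hdvd),
        Nat.div_div_self hdvd hcardU]
    have hprim : IsPrimitiveRoot ((ζ : F)) n := by
      have := IsPrimitiveRoot.orderOf (ζ : F)
      rwa [orderOf_units, hordζ] at this
    have hM : (Finset.univ.filter (fun x : F => x ^ n = 1)) = Polynomial.nthRootsFinset n (1 : F) := by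
      ext u
      simp [Polynomial.mem_nthRootsFinset hn0]
    have hcardM : (Finset.univ.filter (fun x : F => x ^ n = 1)).card = n := by
      rw [hM, hprim.card_nthRootsFinset]
    set M := Finset.univ.filter (fun x : F => x ^ n = 1) with hMdef
    have hS : (Finset.univ.filter (fun u : F => ∃ x : F, x ^ n = 1 ∧ u = x ^ 2))
        = M.image (· ^ 2) := by
      ext u
      simp only [Finset.mem_filter, Finset.mem_univ, true_and, Finset.mem_image, hMdef,
        eq_comm]
    rw [hS]
    have hfib : ∀ u ∈ M.image (· ^ 2), (M.filter (fun x => x ^ 2 = u)).card = 2 := by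
      intro u hu
      obtain ⟨y, hyM, hy⟩ := Finset.mem_image.mp hu
      have hyn : y ^ n = 1 := (Finset.mem_filter.mp hyM).2
      have hy0 : y ≠ 0 := hne0 y hyn
      have hyne : y ≠ -y := by
        intro h
        have h2y : (2 : F) * y = 0 := by linear_combination h
        rcases mul_eq_zero.mp h2y with h' | h'
        · exact h2ne h'
        · exact hy0 h'
      have : M.filter (fun x => x ^ 2 = u) = {y, -y} := by
        ext x
        simp only [Finset.mem_filter, hMdef, Finset.mem_univ, true_and, Finset.mem_insert,
          Finset.mem_singleton]
        constructor
        · rintro ⟨hxn, hxu⟩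
          have : (x - y) * (x + y) = 0 := by linear_combination hxu - hy
          rcases mul_eq_zero.mp this with h | h
          · exact Or.inl (by linear_combination h)
          · exact Or.inr (by linear_combination h)
        · rintro (rfl | rfl)
          · exact ⟨hyn, hy⟩
          · exact ⟨by rw [hneven.neg_pow, hyn], by rw [← hy]; ring⟩
      rw [this, Finset.card_insert_of_notMem (by simpa using hyne), Finset.card_singleton]
    have hsum : M.card = 2 * (M.image (· ^ 2)).card := by
      rw [Finset.card_eq_sum_card_image (· ^ 2) M, Finset.sum_congr rfl hfib,
        Finset.sum_const, smul_eq_mul, mul_comm]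
    rw [hcardM] at hsum
    omega
  · -- no four coplanar
    intro x y z t hx hy hz ht ne1 ne2 ne3 ne4 ne5 ne6
    rintro ⟨a, b, c, ha, hb, hc, heq⟩
    have hinv : ∀ u : F, u ^ n = 1 → u ^ (3 ^ d) = u⁻¹ := by
      intro u hu
      exact eq_inv_of_mul_eq_one_left (by rw [← pow_succ]; exact hu)
    have hcoef : ∀ a : F, (a = 0 ∨ a = 1 ∨ a = -1) → a ^ (3 ^ d) = a := by
      rintro a (rfl | rfl | rfl)
      · exact zero_pow (by positivity)
      · exact one_pow _
      · exact Odd.neg_one_pow hodd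
    have e2 : a * x⁻¹ + b * y⁻¹ + c * z⁻¹ = t⁻¹ := by
      have h := congrArg (· ^ 3 ^ d) heq
      rw [add_pow_char_pow, add_pow_char_pow, mul_pow, mul_pow, mul_pow,
        hcoef a ha, hcoef b hb, hcoef c hc,
        hinv x hx, hinv y hy, hinv z hz, hinv t ht] at h
      exact h
    rcases master h3 a b c x y z t ha hb hc (hne0 x hx) (hne0 y hy) (hne0 z hz) (hne0 t ht)
      heq e2 with h | h | h | h | h | h
    · exact ne1 h
    · exact ne2 h
    · exact ne3 h
    · exact ne4 h
    · exact ne5 h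
    · exact ne6 h
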